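/- Let μ and ν be probability measures on a measurable space, and for each N ∈ ℕ let F_N be a σ-algebra such that ν|_{F_N} is absolutely continuous with respect to μ|_{F_N} with density Q_N. If E_μ[Q_N^{1/2}] → 0 as N → ∞, then ν is singular with respect to μ (on σ(∪_N F_N), assuming F_N increase to the full σ-algebra). -/

import Mathlib

open MeasureTheory Filter Topology Real
open scoped ENNReal

/-- (Kakutani-type singularity criterion.) Let `μ`, `ν` be probability
measures on a measurable space and `(F_N)` an increasing sequence of σ-algebras generating the
full σ-algebra. Suppose for each `N` the restriction of `ν` to `F_N` is absolutely continuous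
with respect to that of `μ` with density `Q_N` (an `F_N`-measurable nonnegative function with
`ν(s) = ∫_s Q_N dμ` for every `F_N`-measurable `s`). If `E_μ[Q_N^{1/2}] → 0` as `N → ∞`,
then `ν` is singular with respect to `μ`. -/
theorem hellinger_vanishing_implies_singular
    {Ω : Type*} {m0 : MeasurableSpace Ω} (μ ν : Measure Ω)
    [IsProbabilityMeasure μ] [IsProbabilityMeasure ν]
    (F : ℕ → MeasurableSpace Ω)
    (hFle : ∀ N, F N ≤ m0) (hFmono : Monotone F)
    (hFgen : (⨆ N, F N) = m0)
    (Q : ℕ → Ω → ℝ)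
    (hQmeas : ∀ N, StronglyMeasurable[F N] (Q N))
    (hQpos : ∀ N, ∀ ω, 0 ≤ Q N ω)
    (hQint : ∀ N, Integrable (Q N) μ)
    (hdensity : ∀ N, ∀ s : Set Ω, MeasurableSet[F N] s →
      ν s = ENNReal.ofReal (∫ ω in s, Q N ω ∂μ))
    (hHellinger : Tendsto (fun N => ∫ ω, Real.sqrt (Q N ω) ∂μ) atTop (𝓝 0)) :
    ν ⟂ₘ μ := by
  -- measurability of Q N w.r.t. m0
  have hQm : ∀ N, Measurable (Q N) := fun N => ((hQmeas N).mono (hFle N)).measurable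
  -- integrability of sqrt (Q N)
  have hsqrtint : ∀ N, Integrable (fun ω => Real.sqrt (Q N ω)) μ := by
    intro N
    refine Integrable.mono' ((integrable_const 1).add (hQint N))
      ((Real.continuous_sqrt.measurable.comp (hQm N)).aestronglyMeasurable) ?_
    filter_upwards with ω
    rw [Real.norm_eq_abs, abs_of_nonneg (Real.sqrt_nonneg _)]
    show Real.sqrt (Q N ω) ≤ 1 + Q N ω
    nlinarith [Real.sq_sqrt (hQpos N ω), Real.sqrt_nonneg (Q N ω), hQpos N ω]
  -- choose indices
  have hchoice : ∀ n : ℕ, ∃ M : ℕ,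
      ∫ ω, Real.sqrt (Q M ω) ∂μ < ((1:ℝ)/2)^n * ((1:ℝ)/2)^n := by
    intro n
    have hpos : (0:ℝ) < ((1:ℝ)/2)^n * ((1:ℝ)/2)^n := by positivity
    exact (hHellinger.eventually (gt_mem_nhds hpos)).exists
  choose M hM using hchoice
  set s : ℕ → Set Ω := fun n => {ω | ((1:ℝ)/2)^n ≤ Real.sqrt (Q (M n) ω)} with hs
  -- s n is F (M n)-measurable
  have hsmeasF : ∀ n, MeasurableSet[F (M n)] (s n) := by
    intro n
    exact measurableSet_le measurable_const
      (Real.continuous_sqrt.measurable.comp (hQmeas (M n)).measurable)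
  have hsmeas : ∀ n, MeasurableSet (s n) := fun n => hFle (M n) _ (hsmeasF n)
  -- μ bound
  have hμs : ∀ n, μ (s n) ≤ ENNReal.ofReal (((1:ℝ)/2)^n) := by
    intro n
    have hmark := mul_meas_ge_le_integral_of_nonneg
      (f := fun ω => Real.sqrt (Q (M n) ω))
      (Filter.Eventually.of_forall fun ω => Real.sqrt_nonneg _)
      (hsqrtint (M n)) (((1:ℝ)/2)^n)
    have hlt : ((1:ℝ)/2)^n * (μ (s n)).toReal < ((1:ℝ)/2)^n * ((1:ℝ)/2)^n :=
      lt_of_le_of_lt hmark (hM n)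
    have hpow : (0:ℝ) < ((1:ℝ)/2)^n := by positivity
    have h2 : (μ (s n)).toReal ≤ ((1:ℝ)/2)^n := le_of_lt ((mul_lt_mul_iff_right₀ hpow).mp hlt)
    rw [← ENNReal.ofReal_toReal (measure_ne_top μ (s n))]
    exact ENNReal.ofReal_le_ofReal h2
  -- ν bound on complement
  have hνs : ∀ n, ν (s n)ᶜ ≤ ENNReal.ofReal (((1:ℝ)/2)^n * ((1:ℝ)/2)^n) := by
    intro n
    rw [hdensity (M n) (s n)ᶜ (hsmeasF n).compl]
    apply ENNReal.ofReal_le_ofReal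
    have hint : ∫ ω in (s n)ᶜ, Q (M n) ω ∂μ
        ≤ ∫ _ω in (s n)ᶜ, ((1:ℝ)/2)^n * ((1:ℝ)/2)^n ∂μ := by
      refine setIntegral_mono_on ((hQint (M n)).integrableOn) (integrableOn_const
        (measure_ne_top μ _)) (hsmeas n).compl ?_
      intro ω hω
      have hω' : Real.sqrt (Q (M n) ω) < ((1:ℝ)/2)^n := by
        simpa [hs, not_le] using hω
      nlinarith [Real.sq_sqrt (hQpos (M n) ω), Real.sqrt_nonneg (Q (M n) ω)]
    calc ∫ ω in (s n)ᶜ, Q (M n) ω ∂μ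
        ≤ ((1:ℝ)/2)^n * ((1:ℝ)/2)^n * (μ (s n)ᶜ).toReal := by
          simpa [mul_comm, measureReal_def] using hint
      _ ≤ ((1:ℝ)/2)^n * ((1:ℝ)/2)^n := by
          have : (μ (s n)ᶜ).toReal ≤ 1 := by
            have := prob_le_one (μ := μ) (s := (s n)ᶜ)
            simpa [ENNReal.toReal_le_toReal (measure_ne_top μ _)] using
              ENNReal.toReal_mono (by norm_num) this
          nlinarith [pow_pos (by norm_num : (0:ℝ) < 1/2) n]
  -- assemble
  have hlimmeas : MeasurableSet (limsup s atTop) := by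
    rw [limsup_eq_iInf_iSup_of_nat]
    simp only [Set.iInf_eq_iInter, Set.iSup_eq_iUnion]
    exact MeasurableSet.iInter fun n => MeasurableSet.iUnion fun i =>
      MeasurableSet.iUnion fun _ => hsmeas i
  refine ⟨(limsup s atTop)ᶜ, hlimmeas.compl, ?_, ?_⟩
  · -- ν ((limsup s)ᶜ) = 0
    have hrw : (limsup s atTop)ᶜ = ⋃ m, ⋂ n, ⋂ _ : n ≥ m, (s n)ᶜ := by
      rw [limsup_eq_iInf_iSup_of_nat]
      simp only [Set.iInf_eq_iInter, Set.iSup_eq_iUnion, Set.compl_iInter, Set.compl_iUnion]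
    rw [hrw]
    refine measure_iUnion_null fun m => ?_
    have hle : ∀ n ≥ m, ν (⋂ n, ⋂ _ : n ≥ m, (s n)ᶜ) ≤ ENNReal.ofReal (((1:ℝ)/2)^n * ((1:ℝ)/2)^n) := by
      intro n hn
      exact le_trans (measure_mono (Set.iInter₂_subset n hn)) (hνs n)
    have htend : Tendsto (fun n : ℕ => ENNReal.ofReal (((1:ℝ)/2)^n * ((1:ℝ)/2)^n)) atTop (𝓝 0) := by
      have : Tendsto (fun n : ℕ => ((1:ℝ)/2)^n * ((1:ℝ)/2)^n) atTop (𝓝 0) := by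
        simpa using (tendsto_pow_atTop_nhds_zero_of_lt_one (by norm_num : (0:ℝ) ≤ 1/2)
          (by norm_num : (1:ℝ)/2 < 1)).mul
          (tendsto_pow_atTop_nhds_zero_of_lt_one (by norm_num : (0:ℝ) ≤ 1/2)
          (by norm_num : (1:ℝ)/2 < 1))
      have h := (ENNReal.continuous_ofReal.tendsto 0).comp this
      rw [ENNReal.ofReal_zero] at h
      exact h
    have := ge_of_tendsto htend (eventually_atTop.mpr ⟨m, hle⟩)
    simpa using this
  · -- μ (limsup s) = 0
    simp only [compl_compl]
    refine measure_limsup_atTop_eq_zero ?_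
    have hsum : ∑' n, μ (s n) ≤ ∑' n : ℕ, ENNReal.ofReal (((1:ℝ)/2)^n) :=
      ENNReal.tsum_le_tsum hμs
    refine ne_top_of_le_ne_top ?_ hsum
    have h1 : ∀ n : ℕ, ENNReal.ofReal (((1:ℝ)/2)^n) = ((2:ℝ≥0∞)⁻¹)^n := by
      intro n
      rw [ENNReal.ofReal_pow (by norm_num)]
      congr 1
      rw [show (1:ℝ)/2 = (2:ℝ)⁻¹ by norm_num,
        ENNReal.ofReal_inv_of_pos (by norm_num)]
      norm_num
    simp only [h1, ENNReal.tsum_geometric]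
    simp [ENNReal.sub_ne_top]
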